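/- Disconnection cost equals tropical cut product: let S be a finite type, f₁, …, f_ℓ : S → S → ℕ∞ (ℓ ≥ 1) a pipeline, each f_i taking values only in {0, 1, ⊤}, and S₀, F ⊆ S. Then D_P(S₀, F) = B_P(S₀, F), where D_P(S₀, F) ∈ ℕ∞ is the minimum cardinality of an index set I ⊆ {1,…,ℓ} that disconnects S₀ from F (⊤ if no such set exists), and B_P(S₀, F) ∈ ℕ∞ is the infimum, over all sequences of subsets A₀ = S₀, A₁, …, A_{ℓ-1} ⊆ S, A_ℓ = S ∖ F, of Σ_{i=1}^{ℓ} sup {f_i s t | s ∈ A_{i-1}, t ∉ A_i} (sums taken in ℕ∞, suprema of empty sets being 0). -/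

import Mathlib

/-- An index set `I` disconnects `S₀` from `F` in the pipeline `f₁, …, f_ℓ` if there
is no path `s₀ ∈ S₀, s₁, …, s_ℓ ∈ F` with `f_i s_{i-1} s_i ≥ 1` for every `i` and
`f_i s_{i-1} s_i = ⊤` whenever `i ∈ I`. -/
def Disconnects {S : Type*} {ℓ : ℕ} (f : Fin ℓ → S → S → ℕ∞) (S₀ F : Set S)
    (I : Finset (Fin ℓ)) : Prop :=
  ¬ ∃ w : Fin (ℓ + 1) → S, w 0 ∈ S₀ ∧ w (Fin.last ℓ) ∈ F ∧
      (∀ i : Fin ℓ, 1 ≤ f i (w i.castSucc) (w i.succ)) ∧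
      (∀ i ∈ I, f i (w i.castSucc) (w i.succ) = ⊤)

/-- `D_P(S₀,F)`: the minimum cardinality of an index set disconnecting `S₀` from `F`
(`⊤` if there is none). -/
noncomputable def Dcost {S : Type*} {ℓ : ℕ} (f : Fin ℓ → S → S → ℕ∞)
    (S₀ F : Set S) : ℕ∞ :=
  ⨅ (I : Finset (Fin ℓ)) (_ : Disconnects f S₀ F I), (I.card : ℕ∞)

/-- `B_P(S₀,F)`: the infimum over all sequences of cuts `A₀ = S₀, …, A_ℓ = S ∖ F`
of `Σ_{i=1}^{ℓ} sup {f_i s t | s ∈ A_{i-1}, t ∉ A_i}`. -/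
noncomputable def Bcost {S : Type*} {ℓ : ℕ} (f : Fin ℓ → S → S → ℕ∞)
    (S₀ F : Set S) : ℕ∞ :=
  ⨅ (A : Fin (ℓ + 1) → Set S) (_ : A 0 = S₀) (_ : A (Fin.last ℓ) = Fᶜ),
    ∑ i : Fin ℓ, ⨆ s ∈ A i.castSucc, ⨆ t ∈ (A i.succ)ᶜ, f i s t

/-- If a predicate on `Fin (ℓ+1)` holds at `0` but not at `Fin.last ℓ`, then it
crosses from true to false at some step. -/
lemma aux_fin_cross {ℓ : ℕ} (P : Fin (ℓ + 1) → Prop) (h0 : P 0)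
    (hl : ¬ P (Fin.last ℓ)) : ∃ i : Fin ℓ, P i.castSucc ∧ ¬ P i.succ := by
  by_contra h
  push_neg at h
  exact hl (Fin.induction h0 h (Fin.last ℓ))

/-- Disconnection cost equals the tropical cut product: for a pipeline of length
`ℓ ≥ 1` with values in `{0, 1, ⊤}`, `D_P(S₀,F) = B_P(S₀,F)`. -/
theorem Dcost_eq_Bcost {S : Type*} [Fintype S] {ℓ : ℕ} (hℓ : 1 ≤ ℓ)
    (f : Fin ℓ → S → S → ℕ∞)
    (hval : ∀ i : Fin ℓ, ∀ s t : S, f i s t = 0 ∨ f i s t = 1 ∨ f i s t = ⊤)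
    (S₀ F : Set S) :
    Dcost f S₀ F = Bcost f S₀ F := by
  unfold Dcost Bcost
  apply le_antisymm
  · -- D ≤ B
    refine le_iInf fun A => le_iInf fun hA0 => le_iInf fun hAl => ?_
    set c : Fin ℓ → ℕ∞ := fun i => ⨆ s ∈ A i.castSucc, ⨆ t ∈ (A i.succ)ᶜ, f i s t with hc
    by_cases htop : ∑ i, c i = ⊤
    · rw [htop]; exact le_top
    have hct : ∀ i, c i ≠ ⊤ := fun i =>
      ne_top_of_le_ne_top htop (Finset.single_le_sum (fun j _ => zero_le) (Finset.mem_univ i))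
    set I : Finset (Fin ℓ) := Finset.univ.filter (fun i => 1 ≤ c i) with hI
    have hdis : Disconnects f S₀ F I := by
      rintro ⟨w, hw0, hwl, hge, hItop⟩
      obtain ⟨i, hi1, hi2⟩ := aux_fin_cross (fun j => w j ∈ A j)
        (by show w 0 ∈ A 0; rw [hA0]; exact hw0)
        (by show ¬ w (Fin.last ℓ) ∈ A (Fin.last ℓ); rw [hAl]; simpa using hwl)
      have hle : f i (w i.castSucc) (w i.succ) ≤ c i :=
        le_iSup₂_of_le (w i.castSucc) hi1 (le_iSup₂_of_le (w i.succ) hi2 le_rfl)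
      have hiI : i ∈ I := by
        rw [hI, Finset.mem_filter]
        exact ⟨Finset.mem_univ i, le_trans (hge i) hle⟩
      exact hct i (top_le_iff.mp ((hItop i hiI) ▸ hle))
    refine le_trans (iInf₂_le I hdis) ?_
    calc (I.card : ℕ∞) = ∑ _i ∈ I, 1 := by simp
    _ ≤ ∑ i ∈ I, c i := Finset.sum_le_sum (fun i hi => (Finset.mem_filter.mp hi).2)
    _ ≤ ∑ i, c i := Finset.sum_le_sum_of_subset (Finset.subset_univ I)
  · -- B ≤ D
    refine le_iInf fun I => le_iInf fun hdis => ?_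
    set E : Fin ℓ → S → S → Prop :=
      fun i s t => 1 ≤ f i s t ∧ (i ∈ I → f i s t = ⊤) with hE
    set R : ℕ → Set S := fun n => {s | ∃ w : ℕ → S, w 0 ∈ S₀ ∧ w n = s ∧
      ∀ k, ∀ _hk : k < n, ∃ hk' : k < ℓ, E ⟨k, hk'⟩ (w k) (w (k+1))} with hR
    have hR0 : R 0 = S₀ := by
      ext s
      constructor
      · rintro ⟨w, hw0, rfl, -⟩; exact hw0
      · intro hs; exact ⟨fun _ => s, hs, rfl, fun k hk => absurd hk (Nat.not_lt_zero k)⟩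
    have hRstep : ∀ n, ∀ hn : n < ℓ, ∀ s t : S, s ∈ R n → E ⟨n, hn⟩ s t → t ∈ R (n+1) := by
      rintro n hn s t ⟨w, hw0, hwn, hwE⟩ hEst
      refine ⟨fun k => if k ≤ n then w k else t, by simp [hw0],
        by simp [Nat.not_succ_le_self], ?_⟩
      intro k hk
      rcases Nat.lt_succ_iff_lt_or_eq.mp hk with hk | rfl
      · obtain ⟨hk', hE'⟩ := hwE k hk
        refine ⟨hk', ?_⟩
        simpa [Nat.le_of_lt hk, Nat.succ_le_of_lt hk] using hE'
      · refine ⟨hn, ?_⟩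
        simpa [hwn, Nat.not_succ_le_self] using hEst
    have hRF : ∀ t ∈ R ℓ, t ∉ F := by
      rintro t ⟨w, hw0, hwl, hwE⟩ htF
      refine hdis ⟨fun j => w j.val, hw0, ?_, ?_, ?_⟩
      · simp only [Fin.val_last, hwl]; exact htF
      · intro i
        obtain ⟨hk', h1, -⟩ := hwE i.val i.isLt
        exact h1
      · intro i hiI
        obtain ⟨hk', -, h2⟩ := hwE i.val i.isLt
        exact h2 hiI
    set A : Fin (ℓ + 1) → Set S := fun j => if j = Fin.last ℓ then Fᶜ else R j.val with hA
    have hA0 : A 0 = S₀ := by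
      have h0 : (0 : Fin (ℓ+1)) ≠ Fin.last ℓ := by
        rw [Fin.ne_iff_vne]
        simpa using (Nat.one_le_iff_ne_zero.mp hℓ).symm
      rw [hA]; simp only [if_neg h0]
      exact hR0
    have hAl : A (Fin.last ℓ) = Fᶜ := by rw [hA]; simp
    refine le_trans (iInf_le _ A) (le_trans (iInf_le _ hA0) (le_trans (iInf_le _ hAl) ?_))
    have key : ∀ i : Fin ℓ, (⨆ s ∈ A i.castSucc, ⨆ t ∈ (A i.succ)ᶜ, f i s t)
        ≤ if i ∈ I then (1 : ℕ∞) else 0 := by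
      intro i
      refine iSup₂_le fun s hs => iSup₂_le fun t ht => ?_
      have hsc : i.castSucc ≠ Fin.last ℓ := by
        rw [Fin.ne_iff_vne]
        simpa using Nat.ne_of_lt i.isLt
      rw [hA] at hs
      simp only [if_neg hsc, Fin.coe_castSucc] at hs
      have hnE : ¬ E i s t := by
        intro hEst
        have hstep : t ∈ R (i.val + 1) := hRstep i.val i.isLt s t hs hEst
        by_cases hlast : i.succ = Fin.last ℓ
        · have hv : i.val + 1 = ℓ := by
            have := congrArg Fin.val hlast
            simpa using this
          have htF : t ∈ F := by
            have := ht
            rw [hA] at this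
            simp only [hlast, if_pos] at this
            simpa using this
          exact hRF t (hv ▸ hstep) htF
        · apply ht
          rw [hA]
          simp only [if_neg hlast, Fin.val_succ]
          exact hstep
      simp only [hE] at hnE
      by_cases hiI : i ∈ I
      · rw [if_pos hiI]
        rcases hval i s t with h | h | h
        · rw [h]; exact zero_le
        · exact h.le
        · exact absurd ⟨by rw [h]; exact le_top, fun _ => h⟩ hnE
      · rw [if_neg hiI]
        rcases hval i s t with h | h | h
        · exact h.le
        · exact absurd ⟨h.ge, fun hI' => absurd hI' hiI⟩ hnE
        · exact absurd ⟨by rw [h]; exact le_top, fun hI' => absurd hI' hiI⟩ hnE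
    calc ∑ i : Fin ℓ, ⨆ s ∈ A i.castSucc, ⨆ t ∈ (A i.succ)ᶜ, f i s t
        ≤ ∑ i : Fin ℓ, (if i ∈ I then (1:ℕ∞) else 0) :=
          Finset.sum_le_sum (fun i _ => key i)
      _ = ∑ _i ∈ I, (1:ℕ∞) := by rw [Finset.sum_ite_mem, Finset.univ_inter]
      _ = (I.card : ℕ∞) := by simp
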